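/- Consider a parallel network of n roads with latencies ℓ_i(x,y) = a_i·(x/m_i + y/M_i)^{σ_i} + t_i, where a_i ≥ 0, t_i ≥ 0, σ_i ≥ 1 are integers, and 0 < m_i ≤ M_i for every road i. Let k = max_i M_i/m_i and σ = max_i σ_i, and let ξ(σ) = σ·(σ+1)^{−(σ+1)/σ}. Fix total demand F > 0 and F^h ∈ [0,F]. If (g̃^h, 0) is a Wardrop equilibrium routing (with zero tolls) for human demand F and zero autonomous demand, and (f̃^h, f̃^a) is a Wardrop equilibrium routing (with zero tolls) for human demand F^h and autonomous demand F − F^h, then C(f̃^h, f̃^a) ≤ (k^σ/(1 − ξ(σ)))·C(g̃^h, 0). -/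

import Mathlib

/-- The latency of road `i`: `ℓ_i(x,y) = a_i·(x/m_i + y/M_i)^σ_i + t_i`. -/
noncomputable def ell {n : ℕ} (a t m M : Fin n → ℝ) (σs : Fin n → ℕ)
    (i : Fin n) (x y : ℝ) : ℝ :=
  a i * (x / m i + y / M i) ^ σs i + t i

/-- A routing `(fh, fa)` is feasible for demands `(Fh, Fa)`. -/
def Feasible {n : ℕ} (Fh Fa : ℝ) (fh fa : Fin n → ℝ) : Prop :=
  (∀ i, 0 ≤ fh i) ∧ (∀ i, 0 ≤ fa i) ∧ (∑ i, fh i) = Fh ∧ (∑ i, fa i) = Fa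

/-- The social cost `C(fh,fa) = Σ_i ℓ_i(fh_i,fa_i)·(fh_i + fa_i)`. -/
noncomputable def SocialCost {n : ℕ} (a t m M : Fin n → ℝ) (σs : Fin n → ℕ)
    (fh fa : Fin n → ℝ) : ℝ :=
  ∑ i, ell a t m M σs i (fh i) (fa i) * (fh i + fa i)

/-- Wardrop equilibrium with zero tolls: the routing is feasible and every road carrying
positive flow of a type has latency at most that of every other road. -/
noncomputable def WardropEq {n : ℕ} (a t m M : Fin n → ℝ) (σs : Fin n → ℕ)
    (Fh Fa : ℝ) (fh fa : Fin n → ℝ) : Prop :=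
  Feasible Fh Fa fh fa ∧
  (∀ i j, 0 < fh i →
    ell a t m M σs i (fh i) (fa i) ≤ ell a t m M σs j (fh j) (fa j)) ∧
  (∀ i j, 0 < fa i →
    ell a t m M σs i (fh i) (fa i) ≤ ell a t m M σs j (fh j) (fa j))


/-- Core smoothness inequality with the exact exponent `d`. -/
lemma xi_smooth_core (d : ℕ) (hd : 1 ≤ d) {u v : ℝ} (hu : 0 ≤ u) (hv : 0 ≤ v) :
    u ^ d * v ≤ v ^ (d + 1) +
      (d : ℝ) * ((d : ℝ) + 1) ^ (-((d : ℝ) + 1) / (d : ℝ)) * u ^ (d + 1) := by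
  set D : ℝ := (d : ℝ) with hDdef
  have hD1 : (1:ℝ) ≤ D := by rw [hDdef]; exact_mod_cast hd
  have hD0 : (0:ℝ) < D := lt_of_lt_of_le one_pos hD1
  have hD10 : (0:ℝ) < D + 1 := by linarith
  have hpq : Real.HolderConjugate ((D+1)/D) (D+1) := by
    constructor
    · rw [inv_div, inv_one]
      field_simp
    · positivity
    · positivity
  set s : ℝ := (D+1) ^ (-(1/(D+1))) with hs
  have hs0 : 0 < s := Real.rpow_pos_of_pos hD10 _
  have key := Real.young_inequality_of_nonneg
      (mul_nonneg (pow_nonneg hu d) hs0.le) (div_nonneg hv hs0.le) hpq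
  have hab : (u ^ d * s) * (v / s) = u ^ d * v := by
    field_simp
  have ha1 : (u ^ d * s) ^ ((D+1)/D) = u ^ (d+1) * (D+1) ^ (-(1/D)) := by
    rw [Real.mul_rpow (pow_nonneg hu d) hs0.le]
    congr 1
    · rw [← Real.rpow_natCast u d, ← Real.rpow_mul hu, ← Real.rpow_natCast u (d+1)]
      congr 1
      push_cast
      field_simp
      rw [hDdef]
    · rw [hs, ← Real.rpow_mul hD10.le]
      congr 1
      field_simp
  have hb1 : (v / s) ^ (D+1) = v ^ (d+1) * (D+1) := by
    rw [div_eq_mul_inv, Real.mul_rpow hv (inv_nonneg.2 hs0.le)]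
    have hsinv : s⁻¹ = (D+1) ^ (1/(D+1)) := by
      rw [hs, ← Real.rpow_neg hD10.le]
      ring_nf
    rw [hsinv, ← Real.rpow_mul hD10.le]
    have : 1/(D+1) * (D+1) = 1 := by field_simp
    rw [this, Real.rpow_one]
    congr 1
    rw [← Real.rpow_natCast v (d+1)]
    congr 1
    push_cast
    ring
  rw [hab, ha1, hb1] at key
  have hxi : (u ^ (d+1) * (D+1) ^ (-(1/D))) / ((D+1)/D) =
      D * (D+1) ^ (-(D+1)/D) * u ^ (d+1) := by
    have hsplit : (D+1) ^ (-(D+1)/D) = (D+1) ^ (-(1/D)) * (D+1)⁻¹ := by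
      rw [← Real.rpow_neg_one (D+1), ← Real.rpow_add hD10]
      congr 1
      field_simp
      ring
    rw [hsplit]
    field_simp
  have hv1 : (v ^ (d+1) * (D+1)) / (D+1) = v ^ (d+1) := by
    field_simp
  rw [hxi, hv1] at key
  linarith

/-- Monotonicity of `ξ(p) = p·(p+1)^(−(p+1)/p)`. -/
lemma xi_mono {p q : ℝ} (hp : 1 ≤ p) (hpq : p ≤ q) :
    p * (p+1) ^ (-(p+1)/p) ≤ q * (q+1) ^ (-(q+1)/q) := by
  have hp0 : (0:ℝ) < p := lt_of_lt_of_le one_pos hp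
  have hq0 : (0:ℝ) < q := lt_of_lt_of_le hp0 hpq
  have hsplit : ∀ x : ℝ, 0 < x → x * (x+1) ^ (-(x+1)/x) = (x/(x+1)) * (x+1) ^ (-(1/x)) := by
    intro x hx
    have hx1 : (0:ℝ) < x + 1 := by linarith
    have he : -(x+1)/x = (-1) + (-(1/x)) := by field_simp; ring
    rw [he, Real.rpow_add hx1, Real.rpow_neg_one, div_eq_mul_inv]
    ring
  rw [hsplit p hp0, hsplit q hq0]
  have h1 : p/(p+1) ≤ q/(q+1) := by
    rw [div_le_div_iff₀ (by linarith) (by linarith)]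
    nlinarith
  have h2 : (p+1) ^ (-(1/p)) ≤ (q+1) ^ (-(1/q)) := by
    rw [Real.rpow_neg (by linarith), Real.rpow_neg (by linarith)]
    apply inv_anti₀ (Real.rpow_pos_of_pos (by linarith) _)
    have hB : (1:ℝ) + q ≤ (1+p) ^ (q/p) := by
      have := one_add_mul_self_le_rpow_one_add (s := p) (by linarith)
        (p := q/p) ((one_le_div hp0).2 hpq)
      have hqq : q/p * p = q := by field_simp
      rw [hqq] at this
      exact this
    calc (q+1) ^ (1/q) ≤ ((1+p) ^ (q/p)) ^ (1/q) := by
          apply Real.rpow_le_rpow (by linarith) (by linarith [hB]) (by positivity)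
      _ = (p+1) ^ (1/p) := by
          rw [← Real.rpow_mul (by linarith : (0:ℝ) ≤ 1+p)]
          have : q/p * (1/q) = 1/p := by field_simp
          rw [this, add_comm]
  apply mul_le_mul h1 h2 (Real.rpow_nonneg (by linarith) _) (by positivity)

lemma xi_smooth (d σ : ℕ) (hd : 1 ≤ d) (hdσ : d ≤ σ) {u v : ℝ} (hu : 0 ≤ u) (hv : 0 ≤ v) :
    u ^ d * v ≤ v ^ (d + 1) +
      (σ : ℝ) * ((σ : ℝ) + 1) ^ (-((σ : ℝ) + 1) / (σ : ℝ)) * u ^ (d + 1) := by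
  have h1 := xi_smooth_core d hd hu hv
  have h2 : (d : ℝ) * ((d : ℝ) + 1) ^ (-((d : ℝ) + 1) / (d : ℝ)) ≤
      (σ : ℝ) * ((σ : ℝ) + 1) ^ (-((σ : ℝ) + 1) / (σ : ℝ)) := by
    apply xi_mono (by exact_mod_cast hd) (by exact_mod_cast hdσ)
  nlinarith [pow_nonneg hu (d+1)]

/-- Bounding the Price of Autonomy for heterogeneous networks: if `(g̃ʰ, 0)` is an
equilibrium with all-human demand `F` and `(f̃ʰ, f̃ᵃ)` is an equilibrium with human demand
`Fʰ` and autonomous demand `F − Fʰ`, then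
`C(f̃ʰ, f̃ᵃ) ≤ (k^σ / (1 − ξ(σ)))·C(g̃ʰ, 0)`, where `k = max_i M_i/m_i`,
`σ = max_i σ_i`, and `ξ(σ) = σ(σ+1)^(−(σ+1)/σ)`. -/
theorem price_of_autonomy_bound
    (n : ℕ) (a t m M : Fin n → ℝ) (σs : Fin n → ℕ)
    (ha : ∀ i, 0 ≤ a i) (ht : ∀ i, 0 ≤ t i) (hσs : ∀ i, 1 ≤ σs i)
    (hm : ∀ i, 0 < m i) (hmM : ∀ i, m i ≤ M i)
    (k : ℝ) (hk : IsGreatest (Set.range fun i => M i / m i) k)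
    (σ : ℕ) (hσ : IsGreatest (Set.range fun i => σs i) σ)
    (F Fh : ℝ) (hF : 0 < F) (hFh : Fh ∈ Set.Icc 0 F)
    (gh : Fin n → ℝ)
    (hg : WardropEq a t m M σs F 0 gh (fun _ => 0))
    (fh fa : Fin n → ℝ)
    (hf : WardropEq a t m M σs Fh (F - Fh) fh fa) :
    SocialCost a t m M σs fh fa ≤
      k ^ σ / (1 - (σ : ℝ) * ((σ : ℝ) + 1) ^ (-((σ : ℝ) + 1) / (σ : ℝ))) *
        SocialCost a t m M σs gh (fun _ => 0) := by
  obtain ⟨⟨hfh0, hfa0, hfhs, hfas⟩, hfEqH, hfEqA⟩ := hf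
  obtain ⟨⟨hgh0, -, hghs, -⟩, -, -⟩ := hg
  have hMpos : ∀ i, 0 < M i := fun i => lt_of_lt_of_le (hm i) (hmM i)
  have hz0 : ∀ i, 0 ≤ fh i + fa i := fun i => add_nonneg (hfh0 i) (hfa0 i)
  have hzsum : ∑ i, (fh i + fa i) = F := by
    rw [Finset.sum_add_distrib, hfhs, hfas]; ring
  have hLnn : ∀ i, 0 ≤ ell a t m M σs i (fh i) (fa i) := fun i =>
    add_nonneg (mul_nonneg (ha i) (pow_nonneg (add_nonneg (div_nonneg (hfh0 i) (hm i).le)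
      (div_nonneg (hfa0 i) (hMpos i).le)) _)) (ht i)
  have hL0nn : ∀ i, 0 ≤ ell a t m M σs i (gh i) 0 := fun i =>
    add_nonneg (mul_nonneg (ha i) (pow_nonneg (add_nonneg (div_nonneg (hgh0 i) (hm i).le)
      (div_nonneg le_rfl (hMpos i).le)) _)) (ht i)
  set ξ : ℝ := (σ : ℝ) * ((σ : ℝ) + 1) ^ (-((σ : ℝ) + 1) / (σ : ℝ)) with hξdef
  obtain ⟨i₀, hi₀⟩ := hσ.1
  have hσ1 : 1 ≤ σ := hi₀ ▸ hσs i₀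
  have hσR : (1:ℝ) ≤ (σ:ℝ) := by exact_mod_cast hσ1
  have hξpos : 0 < ξ := mul_pos (by linarith) (Real.rpow_pos_of_pos (by linarith) _)
  have hξlt1 : ξ < 1 := by
    have h2 : ((σ:ℝ)+1) ^ (-((σ:ℝ)+1)/(σ:ℝ)) ≤ ((σ:ℝ)+1) ^ (-1:ℝ) := by
      apply Real.rpow_le_rpow_of_exponent_le (by linarith)
      rw [div_le_iff₀ (by linarith : (0:ℝ) < (σ:ℝ))]
      linarith
    have h3 : ξ ≤ (σ:ℝ) * ((σ:ℝ)+1) ^ (-1:ℝ) :=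
      mul_le_mul_of_nonneg_left h2 (by linarith)
    rw [Real.rpow_neg_one] at h3
    have h4 : (σ:ℝ) * ((σ:ℝ)+1)⁻¹ < 1 := by
      rw [← div_eq_mul_inv, div_lt_one (by linarith)]
      linarith
    linarith
  -- Step 1: variational inequality
  have step1 : SocialCost a t m M σs fh fa ≤
      ∑ i, ell a t m M σs i (fh i) (fa i) * gh i := by
    have h2 : (∑ i, ell a t m M σs i (fh i) (fa i) * (fh i + fa i)) * (∑ j, gh j) ≤
        (∑ i, (fh i + fa i)) * (∑ j, ell a t m M σs j (fh j) (fa j) * gh j) := by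
      rw [Finset.sum_mul_sum, Finset.sum_mul_sum]
      refine Finset.sum_le_sum fun i _ => Finset.sum_le_sum fun j _ => ?_
      rcases eq_or_lt_of_le (hz0 i) with h | h
      · rw [← h]; simp
      · have hle : ell a t m M σs i (fh i) (fa i) ≤ ell a t m M σs j (fh j) (fa j) := by
          by_cases hh : 0 < fh i
          · exact hfEqH i j hh
          · push_neg at hh
            exact hfEqA i j (by linarith [hfh0 i])
        nlinarith [mul_le_mul_of_nonneg_right hle (mul_nonneg (hz0 i) (hgh0 j))]
    rw [hzsum, hghs, mul_comm] at h2
    exact le_of_mul_le_mul_left h2 hF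
  -- Step 2: smoothness, road by road
  have step2 : ∀ i, ell a t m M σs i (fh i) (fa i) * gh i ≤
      ell a t m M σs i (gh i) 0 * gh i +
        ξ * (ell a t m M σs i (fh i) (fa i) * (fh i + fa i)) := by
    intro i
    have hui : 0 ≤ fh i / m i + fa i / M i :=
      add_nonneg (div_nonneg (hfh0 i) (hm i).le) (div_nonneg (hfa0 i) (hMpos i).le)
    have hvi : 0 ≤ gh i / m i := div_nonneg (hgh0 i) (hm i).le
    have hkey := xi_smooth (σs i) σ (hσs i) (hσ.2 ⟨i, rfl⟩) hui hvi
    rw [← hξdef] at hkey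
    set u := fh i / m i + fa i / M i with hu
    set v := gh i / m i with hv
    have hmv : m i * v = gh i := by rw [hv]; exact mul_div_cancel₀ _ (hm i).ne'
    have hmu : m i * u ≤ fh i + fa i := by
      rw [hu, mul_add]
      have e1 : m i * (fh i / m i) = fh i := by exact mul_div_cancel₀ _ (hm i).ne'
      have e2 : m i * (fa i / M i) ≤ fa i := by
        calc m i * (fa i / M i) ≤ M i * (fa i / M i) :=
              mul_le_mul_of_nonneg_right (hmM i) (div_nonneg (hfa0 i) (hMpos i).le)
          _ = fa i := by exact mul_div_cancel₀ _ (hMpos i).ne'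
      linarith
    have hLi : ell a t m M σs i (fh i) (fa i) = a i * u ^ σs i + t i := by
      rw [hu]; rfl
    have hL0i : ell a t m M σs i (gh i) 0 = a i * v ^ σs i + t i := by
      rw [hv]; simp [ell]
    rw [hLi, hL0i, ← hmv]
    calc (a i * u ^ σs i + t i) * (m i * v)
        = a i * m i * (u ^ σs i * v) + t i * (m i * v) := by ring
      _ ≤ a i * m i * (v ^ (σs i + 1) + ξ * u ^ (σs i + 1)) + t i * (m i * v) := by
          have := mul_le_mul_of_nonneg_left hkey (mul_nonneg (ha i) (hm i).le)
          linarith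
      _ = (a i * v ^ σs i + t i) * (m i * v) + ξ * (a i * u ^ σs i * (m i * u)) := by
          rw [pow_succ, pow_succ]; ring
      _ ≤ (a i * v ^ σs i + t i) * (m i * v) +
            ξ * ((a i * u ^ σs i + t i) * (fh i + fa i)) := by
          have h1 : a i * u ^ σs i * (m i * u) ≤ a i * u ^ σs i * (fh i + fa i) :=
            mul_le_mul_of_nonneg_left hmu (mul_nonneg (ha i) (pow_nonneg hui _))
          have h2 : a i * u ^ σs i * (fh i + fa i) ≤
              (a i * u ^ σs i + t i) * (fh i + fa i) :=
            mul_le_mul_of_nonneg_right (by nlinarith [ht i]) (hz0 i)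
          nlinarith [mul_le_mul_of_nonneg_left (le_trans h1 h2) hξpos.le]
  have hCg : SocialCost a t m M σs gh (fun _ => 0) =
      ∑ i, ell a t m M σs i (gh i) 0 * gh i := by
    unfold SocialCost; simp
  have sum2 : ∑ i, ell a t m M σs i (fh i) (fa i) * gh i ≤
      SocialCost a t m M σs gh (fun _ => 0) + ξ * SocialCost a t m M σs fh fa := by
    rw [hCg]
    unfold SocialCost
    rw [Finset.mul_sum, ← Finset.sum_add_distrib]
    exact Finset.sum_le_sum fun i _ => step2 i
  have hCf_le : SocialCost a t m M σs fh fa ≤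
      SocialCost a t m M σs gh (fun _ => 0) + ξ * SocialCost a t m M σs fh fa :=
    le_trans step1 sum2
  have hCg0 : 0 ≤ SocialCost a t m M σs gh (fun _ => 0) := by
    rw [hCg]
    exact Finset.sum_nonneg fun i _ => mul_nonneg (hL0nn i) (hgh0 i)
  obtain ⟨j₀, hj₀⟩ := hk.1
  have hk1 : (1:ℝ) ≤ k := by
    rw [← hj₀]
    exact (one_le_div (hm j₀)).2 (hmM j₀)
  have hkσ : (1:ℝ) ≤ k ^ σ := one_le_pow₀ hk1
  rw [div_mul_eq_mul_div, le_div_iff₀ (by linarith : (0:ℝ) < 1 - ξ)]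
  nlinarith [hCf_le, hCg0, hkσ, mul_nonneg (by linarith : (0:ℝ) ≤ k ^ σ - 1) hCg0]
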